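/- Let $(\theta_n, W_n)$ be generated by the coupled stochastic recursions $\theta_{n+1} = \theta_n + \gamma_n[h(\theta_n, W_n) + \xi_{n+1}]$ and $W_{n+1} = W_n + \eta_n g(\theta_n, W_n)$. Suppose: (i) there is a map $f$ with $h(f(W), W) = 0$ for all $W$, $f$ is $L_f$-Lipschitz, $h$ is $L_h$-Lipschitz in both arguments; (ii) $(\theta - f(W))^\top h(\theta, W) \le -\mu_1 \|\theta - f(W)\|^2$; (iii) $\mathbb{E}[\xi_{n+1} | \mathcal{F}_n] = 0$ and $\mathbb{E}[\|\xi_{n+1}\|^2 | \mathcal{F}_n] \le \Lambda$; (iv) $g$ is $L_g$-Lipschitz and $g(f(W^*), W^*) = 0$ for a fixed point $W^*$. Then with $\tilde\theta_n = \theta_n - f(W_n)$ and $\tilde W_n = W_n - W^*$: $\mathbb{E}[\|\tilde\theta_{n+1}\|^2 | \mathcal{F}_n] \le \gamma_n^2 \Lambda + (1 - 2\gamma_n\mu_1 + L_h^2\gamma_n^2)\|\tilde\theta_n\|^2 + 2L_f^2 L_g^2 \eta_n^2 \|\tilde\theta_n\|^2 + 2L_f^2 L_g^2 (L_f+1)^2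 \eta_n^2 \|\tilde W_n\|^2 + (L_f^2 \gamma_n^2 + \frac{2(1+L_h\gamma_n)^2 \eta_n^2 L_g^2}{\gamma_n^2})\|\tilde\theta_n\|^2 + \frac{2(1+L_h\gamma_n)^2 \eta_n^2 L_g^2 (L_f+1)^2}{\gamma_n^2} \|\tilde W_n\|^2$. -/

import Mathlib

open MeasureTheory

set_option maxHeartbeats 1000000 in
/-- One-step mean-square bound for the fast iterate of a two-timescale stochastic
approximation: conditioning on the past, the next error `θ' - f W'` satisfies the
stated inequality in expectation over the martingale-difference noise. -/
theorem stmt6 {E : Type*} [NormedAddCommGroup E] [InnerProductSpace ℝ E] [CompleteSpace E]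
    {Ω : Type*} [MeasurableSpace Ω] (μ : Measure Ω) [IsProbabilityMeasure μ]
    (f : ℝ → E) (h : E → ℝ → E) (g : E → ℝ → ℝ)
    (Lf Lh Lg μ1 Λ γ η : ℝ) (hγ : 0 < γ) (hη : 0 < η)
    (hLf : 0 ≤ Lf) (hLh : 0 ≤ Lh) (hLg : 0 ≤ Lg) (hμ1 : 0 < μ1) (hΛ : 0 ≤ Λ)
    (hroot : ∀ W : ℝ, h (f W) W = 0)
    (hfLip : ∀ W W' : ℝ, ‖f W - f W'‖ ≤ Lf * |W - W'|)
    (hhLip : ∀ (θ θ' : E) (W W' : ℝ),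
      ‖h θ W - h θ' W'‖ ≤ Lh * (‖θ - θ'‖ + |W - W'|))
    (hdrift : ∀ (θ : E) (W : ℝ),
      (inner ℝ (θ - f W) (h θ W) : ℝ) ≤ -μ1 * ‖θ - f W‖ ^ 2)
    (hgLip : ∀ (θ θ' : E) (W W' : ℝ),
      |g θ W - g θ' W'| ≤ Lg * (‖θ - θ'‖ + |W - W'|))
    (Wstar : ℝ) (hWstar : g (f Wstar) Wstar = 0)
    (θ : E) (W : ℝ) (ξ : Ω → E)
    (hξint : Integrable ξ μ) (hξsq : Integrable (fun ω => ‖ξ ω‖ ^ 2) μ)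
    (hξmean : ∫ ω, ξ ω ∂μ = 0) (hξvar : ∫ ω, ‖ξ ω‖ ^ 2 ∂μ ≤ Λ) :
    ∫ ω, ‖(θ + γ • (h θ W + ξ ω)) - f (W + η * g θ W)‖ ^ 2 ∂μ ≤
      γ ^ 2 * Λ + (1 - 2 * γ * μ1 + Lh ^ 2 * γ ^ 2) * ‖θ - f W‖ ^ 2
        + 2 * Lf ^ 2 * Lg ^ 2 * η ^ 2 * ‖θ - f W‖ ^ 2
        + 2 * Lf ^ 2 * Lg ^ 2 * (Lf + 1) ^ 2 * η ^ 2 * |W - Wstar| ^ 2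
        + (Lf ^ 2 * γ ^ 2 + 2 * (1 + Lh * γ) ^ 2 * η ^ 2 * Lg ^ 2 / γ ^ 2) * ‖θ - f W‖ ^ 2
        + 2 * (1 + Lh * γ) ^ 2 * η ^ 2 * Lg ^ 2 * (Lf + 1) ^ 2 / γ ^ 2 * |W - Wstar| ^ 2 := by
  set t : ℝ := ‖θ - f W‖ with ht
  set s : ℝ := |W - Wstar| with hs
  set G : ℝ := |g θ W| with hG
  set B : E := (θ - f W) + γ • h θ W with hB
  set C : E := f W - f (W + η * g θ W) with hC
  have habsγ : |γ| = γ := abs_of_pos hγ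
  -- Step 1: integrate out the noise
  have hrw : ∀ ω, ‖(θ + γ • (h θ W + ξ ω)) - f (W + η * g θ W)‖ ^ 2
      = ‖B + C‖ ^ 2 + (2 * γ) * (inner ℝ (B + C) (ξ ω) : ℝ) + γ ^ 2 * ‖ξ ω‖ ^ 2 := by
    intro ω
    have heq : (θ + γ • (h θ W + ξ ω)) - f (W + η * g θ W) = (B + C) + γ • ξ ω := by
      rw [hB, hC, smul_add]; abel
    rw [heq, norm_add_sq_real, real_inner_smul_right, norm_smul, Real.norm_eq_abs,
      mul_pow, sq_abs]
    ring
  have hint1 : Integrable (fun ω => (2 * γ) * (inner ℝ (B + C) (ξ ω) : ℝ)) μ :=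
    (hξint.const_inner (B + C)).const_mul _
  have hint2 : Integrable (fun ω => γ ^ 2 * ‖ξ ω‖ ^ 2) μ := hξsq.const_mul _
  have hintegral : ∫ ω, ‖(θ + γ • (h θ W + ξ ω)) - f (W + η * g θ W)‖ ^ 2 ∂μ
      = ‖B + C‖ ^ 2 + γ ^ 2 * ∫ ω, ‖ξ ω‖ ^ 2 ∂μ := by
    have hint12 : Integrable
        (fun ω => ‖B + C‖ ^ 2 + (2 * γ) * (inner ℝ (B + C) (ξ ω) : ℝ)) μ :=
      (integrable_const _).add hint1
    simp_rw [hrw]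
    rw [integral_add hint12 hint2, integral_add (integrable_const _) hint1, integral_const,
      integral_const_mul, integral_const_mul, integral_inner hξint, hξmean]
    simp
  -- basic bounds
  have hhb : ‖h θ W‖ ≤ Lh * t := by
    have := hhLip θ (f W) W W
    simpa [hroot W, ht] using this
  have hBsq : ‖B‖ ^ 2 ≤ (1 - 2 * γ * μ1 + Lh ^ 2 * γ ^ 2) * t ^ 2 := by
    rw [hB, norm_add_sq_real, real_inner_smul_right, norm_smul, Real.norm_eq_abs, mul_pow,
      sq_abs]
    have hd := hdrift θ W
    have hnn : (0:ℝ) ≤ ‖h θ W‖ := norm_nonneg _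
    nlinarith [mul_le_mul hhb hhb hnn (by positivity : (0:ℝ) ≤ Lh * t), sq_nonneg γ]
  have hBn : ‖B‖ ≤ (1 + Lh * γ) * t := by
    calc ‖B‖ ≤ ‖θ - f W‖ + ‖γ • h θ W‖ := norm_add_le _ _
    _ ≤ t + γ * (Lh * t) := by
        rw [norm_smul, Real.norm_eq_abs, habsγ]
        exact add_le_add le_rfl (mul_le_mul_of_nonneg_left hhb hγ.le)
    _ = (1 + Lh * γ) * t := by ring
  have hCn : ‖C‖ ≤ Lf * (η * G) := by
    have := hfLip W (W + η * g θ W)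
    have habs : |W - (W + η * g θ W)| = η * G := by
      rw [hG, show W - (W + η * g θ W) = -(η * g θ W) by ring, abs_neg, abs_mul,
        abs_of_pos hη]
    rw [hC]
    calc ‖f W - f (W + η * g θ W)‖ ≤ Lf * |W - (W + η * g θ W)| := this
    _ = Lf * (η * G) := by rw [habs]
  have hGb : G ≤ Lg * (t + (Lf + 1) * s) := by
    have h1 := hgLip θ (f Wstar) W Wstar
    rw [hWstar, sub_zero] at h1
    have h2 : ‖θ - f Wstar‖ ≤ t + Lf * s := by
      calc ‖θ - f Wstar‖ = ‖(θ - f W) + (f W - f Wstar)‖ := by abel_nf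
      _ ≤ ‖θ - f W‖ + ‖f W - f Wstar‖ := norm_add_le _ _
      _ ≤ t + Lf * s := add_le_add le_rfl (hfLip W Wstar)
    calc G ≤ Lg * (‖θ - f Wstar‖ + |W - Wstar|) := h1
    _ ≤ Lg * ((t + Lf * s) + s) := by
        exact mul_le_mul_of_nonneg_left (add_le_add h2 le_rfl) hLg
    _ = Lg * (t + (Lf + 1) * s) := by ring
  have hG0 : 0 ≤ G := abs_nonneg _
  have ht0 : 0 ≤ t := norm_nonneg _
  have hs0 : 0 ≤ s := abs_nonneg _
  have hG2 : G ^ 2 ≤ 2 * Lg ^ 2 * (t ^ 2 + (Lf + 1) ^ 2 * s ^ 2) := by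
    have h1 : G ^ 2 ≤ (Lg * (t + (Lf + 1) * s)) ^ 2 := by
      have hr : 0 ≤ Lg * (t + (Lf + 1) * s) := by positivity
      nlinarith [mul_le_mul hGb hGb hG0 hr]
    nlinarith [sq_nonneg (t - (Lf + 1) * s), sq_nonneg Lg]
  -- cross term
  set d : ℝ := (γ ^ 2)⁻¹ with hdd
  have hd1 : γ ^ 2 * d = 1 := by
    rw [hdd]; field_simp
  have hd0 : 0 ≤ d := by positivity
  have hcross : 2 * (‖B‖ * ‖C‖) ≤ Lf ^ 2 * γ ^ 2 * t ^ 2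
      + (1 + Lh * γ) ^ 2 * η ^ 2 * G ^ 2 * d := by
    have h1 : ‖B‖ * ‖C‖ ≤ ((1 + Lh * γ) * t) * (Lf * (η * G)) :=
      mul_le_mul hBn hCn (norm_nonneg _) (by positivity)
    set b2 : ℝ := (1 + Lh * γ) * η * G * γ * d with hb2
    have hb2sq : b2 ^ 2 = (1 + Lh * γ) ^ 2 * η ^ 2 * G ^ 2 * d := by
      rw [hb2, hdd]; field_simp
    have hab : (Lf * γ * t) * b2 = ((1 + Lh * γ) * t) * (Lf * (η * G)) := by
      have : (Lf * γ * t) * b2 = ((1 + Lh * γ) * t) * (Lf * (η * G)) * (γ ^ 2 * d) := by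
        rw [hb2]; ring
      rw [this, hd1, mul_one]
    nlinarith [sq_nonneg (Lf * γ * t - b2), h1]
  -- deterministic bound
  have hAsq : ‖B + C‖ ^ 2 ≤ (1 - 2 * γ * μ1 + Lh ^ 2 * γ ^ 2) * t ^ 2
      + Lf ^ 2 * γ ^ 2 * t ^ 2 + (1 + Lh * γ) ^ 2 * η ^ 2 * G ^ 2 * d
      + Lf ^ 2 * η ^ 2 * G ^ 2 := by
    have h1 : ‖B + C‖ ^ 2 ≤ ‖B‖ ^ 2 + 2 * (‖B‖ * ‖C‖) + ‖C‖ ^ 2 := by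
      rw [norm_add_sq_real]
      nlinarith [real_inner_le_norm B C]
    have h2 : ‖C‖ ^ 2 ≤ Lf ^ 2 * η ^ 2 * G ^ 2 := by
      nlinarith [mul_le_mul hCn hCn (norm_nonneg C) (by positivity : (0:ℝ) ≤ Lf * (η * G))]
    linarith
  have hfin1 : (1 + Lh * γ) ^ 2 * η ^ 2 * G ^ 2 * d
      ≤ (1 + Lh * γ) ^ 2 * η ^ 2 * (2 * Lg ^ 2 * (t ^ 2 + (Lf + 1) ^ 2 * s ^ 2)) * d := by
    apply mul_le_mul_of_nonneg_right _ hd0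
    exact mul_le_mul_of_nonneg_left hG2 (by positivity)
  have hfin2 : Lf ^ 2 * η ^ 2 * G ^ 2
      ≤ Lf ^ 2 * η ^ 2 * (2 * Lg ^ 2 * (t ^ 2 + (Lf + 1) ^ 2 * s ^ 2)) :=
    mul_le_mul_of_nonneg_left hG2 (by positivity)
  have hdiv1 : 2 * (1 + Lh * γ) ^ 2 * η ^ 2 * Lg ^ 2 / γ ^ 2
      = 2 * (1 + Lh * γ) ^ 2 * η ^ 2 * Lg ^ 2 * d := by rw [hdd, div_eq_mul_inv]
  have hdiv2 : 2 * (1 + Lh * γ) ^ 2 * η ^ 2 * Lg ^ 2 * (Lf + 1) ^ 2 / γ ^ 2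
      = 2 * (1 + Lh * γ) ^ 2 * η ^ 2 * Lg ^ 2 * (Lf + 1) ^ 2 * d := by
    rw [hdd, div_eq_mul_inv]
  rw [hintegral, hdiv1, hdiv2]
  have hvar : γ ^ 2 * ∫ ω, ‖ξ ω‖ ^ 2 ∂μ ≤ γ ^ 2 * Λ :=
    mul_le_mul_of_nonneg_left hξvar (by positivity)
  have e1 : (1 + Lh * γ) ^ 2 * η ^ 2 * (2 * Lg ^ 2 * (t ^ 2 + (Lf + 1) ^ 2 * s ^ 2)) * d
      = 2 * (1 + Lh * γ) ^ 2 * η ^ 2 * Lg ^ 2 * d * t ^ 2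
        + 2 * (1 + Lh * γ) ^ 2 * η ^ 2 * Lg ^ 2 * (Lf + 1) ^ 2 * d * s ^ 2 := by ring
  have e2 : Lf ^ 2 * η ^ 2 * (2 * Lg ^ 2 * (t ^ 2 + (Lf + 1) ^ 2 * s ^ 2))
      = 2 * Lf ^ 2 * Lg ^ 2 * η ^ 2 * t ^ 2
        + 2 * Lf ^ 2 * Lg ^ 2 * (Lf + 1) ^ 2 * η ^ 2 * s ^ 2 := by ring
  have e3 : (Lf ^ 2 * γ ^ 2 + 2 * (1 + Lh * γ) ^ 2 * η ^ 2 * Lg ^ 2 * d) * t ^ 2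
      = Lf ^ 2 * γ ^ 2 * t ^ 2 + 2 * (1 + Lh * γ) ^ 2 * η ^ 2 * Lg ^ 2 * d * t ^ 2 := by ring
  linarith [hAsq, hfin1, hfin2, hvar, e1, e2, e3]
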